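/- The family V of all trees over {0,1} containing a Silver tree, regarded as a subset of the Polish space Tree_2, is Σ¹₁-complete: it is analytic, and for every Polish space Y and every analytic set B ⊆ Y there is a Borel measurable function f : Y → Tree_2 whose preimage of V equals B. -/

import Mathlib

open MeasureTheory

/-- The Polish space `Tree_2` of all trees over `{0,1}`. -/
abbrev Tree2 : Type :=
  {x : List Bool → Bool // ∀ σ τ : List Bool, x σ = true → τ <+: σ → x τ = true}

/-- A Silver tree: there are a coinfinite `A ⊆ ω` and a function `x : ω → 2` such that
`S = { σ ∈ 2^{<ω} : σ(n) = x(n) for all n < |σ| with n ∈ A }`. -/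
def IsSilverTree (S : Set (List Bool)) : Prop :=
  ∃ A : Set ℕ, Aᶜ.Infinite ∧ ∃ x : ℕ → Bool,
    S = {σ : List Bool | ∀ (n : ℕ) (h : n < σ.length), n ∈ A → σ.get ⟨n, h⟩ = x n}

/-- The family `V` of all trees over `{0,1}` containing a Silver tree. -/
def silverFam : Set Tree2 :=
  {T | ∃ S : Set (List Bool), IsSilverTree S ∧ S ⊆ {σ | T.1 σ = true}}

namespace SilverAux

/-- code of finite sequences of naturals -/
def eCode (s : List ℕ) : ℕ := s.foldl Nat.pair 1

lemma eCode_nil : eCode [] = 1 := rfl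

lemma eCode_append (s : List ℕ) (a : ℕ) : eCode (s ++ [a]) = Nat.pair (eCode s) a := by
  simp [eCode, List.foldl_append]

lemma lt_pair {m : ℕ} (a : ℕ) (hm : 1 ≤ m) : m < Nat.pair m a := by
  unfold Nat.pair; split_ifs with h <;> nlinarith

lemma one_le_eCode (s : List ℕ) : 1 ≤ eCode s := by
  induction s using List.reverseRecOn with
  | nil => simp [eCode_nil]
  | append_singleton s a ih => rw [eCode_append]; exact le_trans ih (le_of_lt (lt_pair a ih))

lemma eCode_le_append (s r : List ℕ) : eCode s ≤ eCode (s ++ r) := by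
  induction r using List.reverseRecOn with
  | nil => simp
  | append_singleton r a ih =>
      rw [← List.append_assoc, eCode_append]
      exact le_trans ih (le_of_lt (lt_pair a (one_le_eCode _)))

lemma eCode_le_of_prefix {s t : List ℕ} (h : s <+: t) : eCode s ≤ eCode t := by
  obtain ⟨r, rfl⟩ := h; exact eCode_le_append s r

lemma length_lt_eCode (s : List ℕ) : s.length < eCode s := by
  induction s using List.reverseRecOn with
  | nil => simp [eCode_nil]
  | append_singleton s a ih =>
      rw [eCode_append]
      have := lt_pair a (one_le_eCode s)
      simp only [List.length_append, List.length_singleton]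
      omega

lemma eCode_injective : Function.Injective eCode := by
  intro s t h
  induction s using List.reverseRecOn generalizing t with
  | nil =>
      induction t using List.reverseRecOn with
      | nil => rfl
      | append_singleton t b _ =>
          exfalso
          rw [eCode_nil, eCode_append] at h
          have := lt_pair b (one_le_eCode t)
          have := one_le_eCode t
          omega
  | append_singleton s a ih =>
      induction t using List.reverseRecOn with
      | nil =>
          exfalso
          rw [eCode_nil, eCode_append] at h
          have := lt_pair a (one_le_eCode s)
          have := one_le_eCode s
          omega
      | append_singleton t b _ =>
          rw [eCode_append, eCode_append] at h
          obtain ⟨h1, h2⟩ := Nat.pair_eq_pair.mp h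
          rw [ih h1, h2]

/-- n is a "free" level determined by s -/
def inF (n : ℕ) (s : List ℕ) : Prop := ∃ t, t <+: s ∧ eCode t = n

/-- σ is in the canonical Silver-ish finite tree attached to s -/
def memS (s : List ℕ) (σ : List Bool) : Prop :=
  ∀ n (h : n < σ.length), σ.get ⟨n, h⟩ = true → inF n s

lemma memS_of_prefix {s : List ℕ} {σ τ : List Bool} (h : memS s σ) (hp : τ <+: σ) :
    memS s τ := by
  intro n hn ht
  have hlen : n < σ.length := lt_of_lt_of_le hn hp.length_le
  apply h n hlen
  have := hp.getElem (i := n) hn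
  simpa [List.get_eq_getElem, this] using ht

open Classical in
/-- the binary tree coding a tree `R` on ℕ -/
noncomputable def redTree (R : Set (List ℕ)) : Tree2 :=
  ⟨fun σ => decide (∃ s ∈ R, memS s σ), by
    intro σ τ h hp
    rw [decide_eq_true_eq] at h ⊢
    obtain ⟨s, hs, hm⟩ := h
    exact ⟨s, hs, memS_of_prefix hm hp⟩⟩

lemma redTree_apply (R : Set (List ℕ)) (σ : List Bool) :
    (redTree R).1 σ = true ↔ ∃ s ∈ R, memS s σ := by
  simp [redTree]

lemma ofFn_prefix (z : ℕ → ℕ) {j k : ℕ} (h : j ≤ k) :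
    (List.ofFn fun i : Fin j => z i) <+: (List.ofFn fun i : Fin k => z i) := by
  rw [List.prefix_iff_eq_take]
  apply List.ext_getElem
  · simp [h]
  · intro i h1 h2
    simp

lemma redTree_mem_silverFam {R : Set (List ℕ)} (z : ℕ → ℕ)
    (hz : ∀ k, (List.ofFn fun i : Fin k => z i) ∈ R) : redTree R ∈ silverFam := by
  set c : ℕ → ℕ := fun k => eCode (List.ofFn fun i : Fin k => z i) with hc
  have hcinj : Function.Injective c := by
    intro j k h
    have := eCode_injective h
    have := congrArg List.length this
    simpa using this
  refine ⟨{σ | ∀ (n : ℕ) (h : n < σ.length), n ∈ (Set.range c)ᶜ → σ.get ⟨n, h⟩ = false},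
    ⟨(Set.range c)ᶜ, by rw [compl_compl]; exact Set.infinite_range_of_injective hcinj,
     fun _ => false, rfl⟩, ?_⟩
  intro σ hσ
  simp only [Set.mem_setOf_eq] at hσ ⊢
  rw [redTree_apply]
  refine ⟨List.ofFn fun i : Fin σ.length => z i, hz _, ?_⟩
  intro n hn htrue
  have hnA : n ∈ Set.range c := by
    by_contra hn'
    rw [hσ n hn hn'] at htrue
    exact Bool.false_ne_true htrue
  obtain ⟨j, hj⟩ := hnA
  refine ⟨List.ofFn fun i : Fin j => z i, ?_, hj⟩
  apply ofFn_prefix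
  by_contra hjk
  push_neg at hjk
  have h1 : c σ.length ≤ c j := eCode_le_of_prefix (ofFn_prefix z (le_of_lt hjk))
  have h2 : σ.length < c σ.length := by
    have := length_lt_eCode (List.ofFn fun i : Fin σ.length => z i)
    simpa using this
  omega

lemma exists_branch_of_redTree_mem {R : Set (List ℕ)}
    (hR : ∀ ⦃s t : List ℕ⦄, s ∈ R → t <+: s → t ∈ R)
    (h : redTree R ∈ silverFam) :
    ∃ z : ℕ → ℕ, ∀ k, (List.ofFn fun i : Fin k => z i) ∈ R := by
  classical
  obtain ⟨S, ⟨A, hA, x, rfl⟩, hsub⟩ := h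
  have claim_pair : ∀ g g', g ∈ Aᶜ → g' ∈ Aᶜ → ∃ s ∈ R, inF g s ∧ inF g' s := by
    intro g g' hg hg'
    set L := max g g' + 1 with hL
    set σ : List Bool := List.ofFn (fun i : Fin L =>
      if (i : ℕ) ∈ A then x i else decide ((i : ℕ) = g ∨ (i : ℕ) = g')) with hσ
    have hget : ∀ (n : ℕ) (hn : n < σ.length),
        σ.get ⟨n, hn⟩ = if n ∈ A then x n else decide (n = g ∨ n = g') := by
      intro n hn
      simp only [List.get_eq_getElem, hσ, List.getElem_ofFn]
    have hσS : σ ∈ {σ : List Bool |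
        ∀ (n : ℕ) (h : n < σ.length), n ∈ A → σ.get ⟨n, h⟩ = x n} := by
      intro n hn hnA
      rw [hget n hn, if_pos hnA]
    have htrue := hsub hσS
    rw [Set.mem_setOf_eq, redTree_apply] at htrue
    obtain ⟨s, hsR, hm⟩ := htrue
    have hlen : σ.length = L := by simp [hσ, hL]
    have hinf : ∀ a, a ∈ Aᶜ → (a = g ∨ a = g') → inF a s := by
      intro a ha hor
      have haL : a < σ.length := by rw [hlen, hL]; rcases hor with rfl | rfl <;> omega
      apply hm a haL
      rw [hget a haL, if_neg ha]
      simpa using hor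
    exact ⟨s, hsR, hinf g hg (Or.inl rfl), hinf g' hg' (Or.inr rfl)⟩
  have claim1 : ∀ g, ∃ u, g ∈ Aᶜ → u ∈ R ∧ eCode u = g := by
    intro g
    by_cases hg : g ∈ Aᶜ
    · obtain ⟨s, hsR, ⟨u, hup, hue⟩, -⟩ := claim_pair g g hg hg
      exact ⟨u, fun _ => ⟨hR hsR hup, hue⟩⟩
    · exact ⟨[], fun hgg => absurd hgg hg⟩
  choose t ht using claim1
  have hcode : ∀ g ∈ Aᶜ, eCode (t g) = g := fun g hg => (ht g hg).2
  have htR : ∀ g ∈ Aᶜ, t g ∈ R := fun g hg => (ht g hg).1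
  have claim2 : ∀ g g', g ∈ Aᶜ → g' ∈ Aᶜ → t g <+: t g' ∨ t g' <+: t g := by
    intro g g' hg hg'
    obtain ⟨s, hsR, ⟨u, hup, hue⟩, ⟨u', hup', hue'⟩⟩ := claim_pair g g' hg hg'
    have e1 : u = t g := eCode_injective (by rw [hue, hcode g hg])
    have e2 : u' = t g' := eCode_injective (by rw [hue', hcode g' hg'])
    rw [← e1, ← e2]
    exact List.prefix_or_prefix_of_prefix hup hup'
  have claim3 : ∀ k, ∃ g, g ∈ Aᶜ ∧ k ≤ (t g).length := by
    intro k
    by_contra hcon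
    push_neg at hcon
    have hinj : Set.InjOn (fun g => (t g).length) Aᶜ := by
      intro g hg g' hg' hlen
      have hteq : t g = t g' := by
        rcases claim2 g g' hg hg' with hp | hp
        · exact hp.eq_of_length hlen
        · exact (hp.eq_of_length hlen.symm).symm
      rw [← hcode g hg, ← hcode g' hg', hteq]
    have himg : (fun g => (t g).length) '' Aᶜ ⊆ Set.Iio k := by
      rintro - ⟨g, hg, rfl⟩
      exact hcon g hg
    exact hA (Set.Finite.of_finite_image ((Set.finite_Iio k).subset himg) hinj)
  have hgs : ∀ n, (claim3 (n + 1)).choose ∈ Aᶜ ∧ n + 1 ≤ (t (claim3 (n + 1)).choose).length :=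
    fun n => (claim3 (n + 1)).choose_spec
  set z : ℕ → ℕ := fun n => (t (claim3 (n + 1)).choose).getD n 0 with hz
  have agree : ∀ g g', g ∈ Aᶜ → g' ∈ Aᶜ → ∀ n, n < (t g).length → n < (t g').length →
      (t g).getD n 0 = (t g').getD n 0 := by
    intro g g' hg hg' n hn hn'
    rw [List.getD_eq_getElem _ _ hn, List.getD_eq_getElem _ _ hn']
    rcases claim2 g g' hg hg' with hp | hp
    · exact hp.getElem hn
    · exact (hp.getElem hn').symm
  refine ⟨z, fun k => ?_⟩
  obtain ⟨G, hG, hkG⟩ := claim3 k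
  have heq : (List.ofFn fun i : Fin k => z i) = (t G).take k := by
    apply List.ext_getElem
    · simp [hkG]
    · intro i h1 h2
      have hik : i < k := by simpa using h1
      simp only [List.getElem_ofFn, List.getElem_take]
      have h3 := (hgs i).2
      have := agree (claim3 (i + 1)).choose G (hgs i).1 hG i (by omega) (by omega)
      rw [hz]
      simp only []
      rw [this, List.getD_eq_getElem _ _ (by omega : i < (t G).length)]
  rw [heq]
  exact hR (htR G hG) (List.take_prefix k (t G))

lemma measurable_of_true_meas {Y : Type} [MeasurableSpace Y] {f : Y → Bool}
    (h : MeasurableSet {y | f y = true}) : Measurable f := by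
  apply measurable_to_countable'
  intro b
  rcases b with _ | _
  · have : f ⁻¹' {false} = {y | f y = true}ᶜ := by
      ext y; cases hf : f y <;> simp [hf]
    rw [this]; exact h.compl
  · have : f ⁻¹' {true} = {y | f y = true} := by ext y; simp
    rw [this]; exact h

/-- cylinder set of a finite sequence -/
def cylSet (l : List ℕ) : Set (ℕ → ℕ) :=
  {z | ∀ i (h : i < l.length), z i = l.get ⟨i, h⟩}

lemma cylSet_anti {l l' : List ℕ} (h : l <+: l') : cylSet l' ⊆ cylSet l := by
  intro z hz i hi
  rw [hz i (lt_of_lt_of_le hi h.length_le), List.get_eq_getElem, List.get_eq_getElem,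
    h.getElem hi]

lemma mem_cylSet_ofFn (z : ℕ → ℕ) (k : ℕ) : z ∈ cylSet (List.ofFn fun i : Fin k => z i) := by
  intro i hi
  simp

lemma cyl_basis {U : Set (ℕ → ℕ)} (hU : IsOpen U) {z : ℕ → ℕ} (hz : z ∈ U) :
    ∃ k, cylSet (List.ofFn fun i : Fin k => z i) ⊆ U := by
  obtain ⟨I, u, h1, h2⟩ := isOpen_pi_iff.1 hU z hz
  refine ⟨I.sup id + 1, fun w hw => h2 ?_⟩
  intro i hi
  have hlt : i < (List.ofFn fun j : Fin (I.sup id + 1) => z j).length := by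
    simpa using Nat.lt_succ_of_le (Finset.le_sup (f := id) hi)
  have := hw i hlt
  simp only [List.get_eq_getElem, List.getElem_ofFn] at this
  rw [this]
  exact (h1 i hi).2

theorem reduction (Y : Type) [TopologicalSpace Y] [PolishSpace Y]
    [MeasurableSpace Y] [BorelSpace Y] (B : Set Y) (hB : AnalyticSet B) :
    ∃ f : Y → Tree2, Measurable f ∧ f ⁻¹' silverFam = B := by
  classical
  rw [AnalyticSet] at hB
  rcases hB with rfl | ⟨g, hgc, hgr⟩
  · -- empty case: constant empty tree
    refine ⟨fun _ => ⟨fun _ => false, by intro σ τ h; exact absurd h (by simp)⟩,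
      measurable_const, ?_⟩
    ext y
    simp only [Set.mem_preimage, Set.mem_empty_iff_false, iff_false]
    rintro ⟨S, ⟨A, hA, x, rfl⟩, hsub⟩
    have : ([] : List Bool) ∈ {σ : List Bool |
        ∀ (n : ℕ) (h : n < σ.length), n ∈ A → σ.get ⟨n, h⟩ = x n} := by
      intro n hn; simp at hn
    exact Bool.false_ne_true (hsub this)
  · letI := TopologicalSpace.upgradeIsCompletelyMetrizable Y
    set Rel : Y → Set (List ℕ) := fun y => {l | y ∈ closure (g '' cylSet l)} with hRel
    have hRelClosed : ∀ y, ∀ ⦃s t : List ℕ⦄, s ∈ Rel y → t <+: s → t ∈ Rel y := by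
      intro y s t hs hp
      exact closure_mono (Set.image_mono (f := g) (cylSet_anti hp)) hs
    refine ⟨fun y => redTree (Rel y), ?_, ?_⟩
    · -- measurability
      apply Measurable.subtype_mk
      apply measurable_pi_lambda
      intro σ
      apply measurable_of_true_meas
      have hset : ∀ y : Y, (redTree (Rel y)).1 σ = true ↔
          y ∈ ⋃ (s : List ℕ) (_ : memS s σ), closure (g '' cylSet s) := by
        intro y
        rw [redTree_apply]
        simp only [Set.mem_iUnion]
        constructor
        · rintro ⟨s, hs, hm⟩; exact ⟨s, hm, hs⟩
        · rintro ⟨s, hm, hs⟩; exact ⟨s, hs, hm⟩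
      have hms : MeasurableSet {y : Y | (redTree (Rel y)).1 σ = true} := by
        rw [Set.ext fun y => hset y]
        exact (MeasurableSet.iUnion fun s => MeasurableSet.iUnion fun _ =>
          isClosed_closure.measurableSet)
      exact hms
    · -- preimage equality
      ext y
      simp only [Set.mem_preimage]
      constructor
      · intro hy
        obtain ⟨z, hz⟩ := exists_branch_of_redTree_mem (hRelClosed y) hy
        have hyz : y = g z := by
          apply eq_of_forall_dist_le
          intro ε hε
          obtain ⟨k, hk⟩ := cyl_basis (Metric.isOpen_ball.preimage hgc)
            (by simp [Metric.mem_ball, hε] : z ∈ g ⁻¹' Metric.ball (g z) ε)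
          have h1 : y ∈ closure (g '' cylSet (List.ofFn fun i : Fin k => z i)) := hz k
          have h2 : g '' cylSet (List.ofFn fun i : Fin k => z i) ⊆ Metric.ball (g z) ε :=
            Set.image_subset_iff.2 hk
          have h3 : y ∈ closure (Metric.ball (g z) ε) := closure_mono h2 h1
          have h4 := Metric.closure_ball_subset_closedBall h3
          simpa [Metric.mem_closedBall] using h4
        rw [← hgr]
        exact ⟨z, hyz.symm⟩
      · intro hy
        rw [← hgr] at hy
        obtain ⟨z, rfl⟩ := hy
        apply redTree_mem_silverFam z
        intro k
        exact subset_closure (Set.mem_image_of_mem g (mem_cylSet_ofFn z k))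

abbrev Amb : Type := ((ℕ → Bool) × (ℕ → ℕ)) × (List Bool → Bool)

def Zset : Set Amb :=
  {p | (∀ a : ℕ, p.1.2 a < p.1.2 (a + 1)) ∧
    (∀ σ τ : List Bool, p.2 σ = true → τ <+: σ → p.2 τ = true) ∧
    ∀ σ : List Bool, (∀ n (h : n < σ.length),
      (¬ ∃ k, k ≤ n ∧ p.1.2 k = n) → σ.get ⟨n, h⟩ = p.1.1 n) → p.2 σ = true}

lemma isClosed_Zset : IsClosed Zset := by
  have h1 : IsClosed {p : Amb | ∀ a : ℕ, p.1.2 a < p.1.2 (a + 1)} := by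
    rw [Set.setOf_forall]
    refine isClosed_iInter fun a => ?_
    have : {p : Amb | p.1.2 a < p.1.2 (a + 1)} =
        (fun p : Amb => (p.1.2 a, p.1.2 (a + 1))) ⁻¹' {q : ℕ × ℕ | q.1 < q.2} := rfl
    rw [this]
    exact (isClosed_discrete _).preimage
      (((continuous_apply a).comp (continuous_snd.comp continuous_fst)).prodMk
        ((continuous_apply (a + 1)).comp (continuous_snd.comp continuous_fst)))
  have h2 : IsClosed {p : Amb | ∀ σ τ : List Bool, p.2 σ = true → τ <+: σ → p.2 τ = true} := by
    rw [Set.setOf_forall]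
    refine isClosed_iInter fun σ => ?_
    rw [Set.setOf_forall]
    refine isClosed_iInter fun τ => ?_
    have : {p : Amb | p.2 σ = true → τ <+: σ → p.2 τ = true} =
        (fun p : Amb => (p.2 σ, p.2 τ)) ⁻¹' {q : Bool × Bool | q.1 = true → τ <+: σ → q.2 = true} :=
      rfl
    rw [this]
    exact (isClosed_discrete _).preimage
      (((continuous_apply σ).comp continuous_snd).prodMk
        ((continuous_apply τ).comp continuous_snd))
  have h3 : IsClosed {p : Amb | ∀ σ : List Bool, (∀ n (h : n < σ.length),
      (¬ ∃ k, k ≤ n ∧ p.1.2 k = n) → σ.get ⟨n, h⟩ = p.1.1 n) → p.2 σ = true} := by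
    rw [Set.setOf_forall]
    refine isClosed_iInter fun σ => ?_
    have : {p : Amb | (∀ n (h : n < σ.length),
        (¬ ∃ k, k ≤ n ∧ p.1.2 k = n) → σ.get ⟨n, h⟩ = p.1.1 n) → p.2 σ = true} =
        (fun p : Amb => ((fun i : Fin σ.length => p.1.1 i,
            fun i : Fin σ.length => p.1.2 i), p.2 σ)) ⁻¹'
          {q : ((Fin σ.length → Bool) × (Fin σ.length → ℕ)) × Bool |
            (∀ n (h : n < σ.length),
              (¬ ∃ k, ∃ hk : k ≤ n, q.1.2 ⟨k, lt_of_le_of_lt hk h⟩ = n) →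
                σ.get ⟨n, h⟩ = q.1.1 ⟨n, h⟩) → q.2 = true} := by
      ext p
      simp only [Set.mem_setOf_eq, Set.mem_preimage]
      constructor
      · intro hp hcond
        apply hp
        intro n h hne
        apply hcond n h
        rintro ⟨k, hk, hkn⟩
        exact hne ⟨k, ⟨hk, hkn⟩⟩
      · intro hp hcond
        apply hp
        intro n h hne
        apply hcond n h
        rintro ⟨k, hk, hkn⟩
        exact hne ⟨k, hk, hkn⟩
    rw [this]
    refine (isClosed_discrete _).preimage ?_
    refine Continuous.prodMk (Continuous.prodMk ?_ ?_) ((continuous_apply σ).comp continuous_snd)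
    · exact continuous_pi fun i => (continuous_apply (i : ℕ)).comp
        (continuous_fst.comp continuous_fst)
    · exact continuous_pi fun i => (continuous_apply (i : ℕ)).comp
        (continuous_snd.comp continuous_fst)
  have : Zset = _ := rfl
  exact h1.inter (h2.inter h3)

noncomputable instance : PolishSpace Zset :=
  haveI : PolishSpace Amb := @PolishSpace.mk _ _ inferInstance inferInstance
  isClosed_Zset.polishSpace

def projT (p : Zset) : Tree2 := ⟨p.1.2, p.2.2.1⟩

lemma continuous_projT : Continuous projT :=
  Continuous.subtype_mk (continuous_snd.comp continuous_subtype_val) _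

lemma silverFam_eq_range : silverFam = Set.range projT := by
  ext T
  constructor
  · rintro ⟨S, ⟨A, hA, x, rfl⟩, hsub⟩
    have hA' : {n | n ∈ Aᶜ}.Infinite := hA
    set m : ℕ → ℕ := Nat.nth (· ∈ Aᶜ) with hm
    have hmono : StrictMono m := Nat.nth_strictMono hA'
    have hrange : Set.range m = Aᶜ := Nat.range_nth_of_infinite hA'
    refine ⟨⟨((x, m), T.1), ⟨fun a => hmono (Nat.lt_succ_self a), T.2, ?_⟩⟩, rfl⟩
    intro σ hσ
    apply hsub
    intro n h hnA
    apply hσ n h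
    rintro ⟨k, hk, hkn⟩
    have : n ∈ Aᶜ := hrange ▸ ⟨k, hkn⟩
    exact this hnA
  · rintro ⟨⟨⟨⟨x, m⟩, t⟩, hmono, htree, hc⟩, rfl⟩
    have hsm : StrictMono m := strictMono_nat_of_lt_succ hmono
    refine ⟨{σ | ∀ (n : ℕ) (h : n < σ.length), n ∈ (Set.range m)ᶜ → σ.get ⟨n, h⟩ = x n},
      ⟨(Set.range m)ᶜ, by rw [compl_compl]; exact Set.infinite_range_of_injective hsm.injective,
        x, rfl⟩, ?_⟩
    intro σ hσ
    simp only [Set.mem_setOf_eq] at hσ ⊢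
    apply hc
    intro n h hne
    apply hσ n h
    rintro ⟨k, hkn⟩
    exact hne ⟨k, le_trans hsm.le_apply (le_of_eq hkn), hkn⟩

lemma silverFam_analytic : AnalyticSet silverFam := by
  rw [silverFam_eq_range]
  exact analyticSet_range_of_polishSpace continuous_projT

end SilverAux

/-- The family of trees containing a Silver tree is `Σ¹₁`-complete: it is analytic,
and every analytic subset of every Polish space Borel-reduces to it. -/
theorem silverFam_analytic_complete :
    AnalyticSet silverFam ∧
      ∀ (Y : Type) [TopologicalSpace Y] [PolishSpace Y]
        [MeasurableSpace Y] [BorelSpace Y] (B : Set Y),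
        AnalyticSet B →
          ∃ f : Y → Tree2, Measurable f ∧ f ⁻¹' silverFam = B := by
  exact ⟨SilverAux.silverFam_analytic, SilverAux.reduction⟩
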